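/- Let α ∈ ℝ^d_≥ and let F : ℝ^d_≥ → ℝ^d be a C¹ point-symmetric vector field at α. Let E_{m,m} be the d×d matrix with a 1 in entry (m,m) and zeros elsewhere, and e_m the m-th standard basis vector. Then the one-sided Gateaux derivative of 𝓛_F at the diagonal matrix Λ_α in direction E_{m,m} exists and equals diag( (F^ext)'|_α e_m ), i.e. lim_{h→0} (𝓛_F(Λ_α + h E_{m,m}) − 𝓛_F(Λ_α))/h = diag( (F^ext)'|_α e_m ). -/

import Mathlib

open Matrix Filter

attribute [local instance] Matrix.frobeniusNormedAddCommGroup Matrix.frobeniusNormedSpace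

lemma LFgd_star_perm {d : ℕ} (σ : Equiv.Perm (Fin d)) :
    star (Equiv.Perm.permMatrix ℂ σ) = Equiv.Perm.permMatrix ℂ σ⁻¹ := by
  ext i j
  simp [Matrix.star_apply, PEquiv.toMatrix_apply, Equiv.toPEquiv_apply, apply_ite, eq_comm,
    Equiv.eq_symm_apply, Equiv.Perm.inv_def]

lemma LFgd_perm_unitary {d : ℕ} (σ : Equiv.Perm (Fin d)) :
    Equiv.Perm.permMatrix ℂ σ ∈ Matrix.unitaryGroup (Fin d) ℂ := by
  constructor <;> rw [LFgd_star_perm] <;>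
  · rw [Equiv.Perm.permMatrix, Equiv.Perm.permMatrix, PEquiv.toMatrix_toPEquiv_mul]
    ext i j
    simp [Matrix.submatrix, PEquiv.toMatrix_apply, Equiv.toPEquiv_apply, Matrix.one_apply,
      Equiv.Perm.inv_def, Equiv.symm_apply_eq, Equiv.eq_symm_apply, eq_comm]

lemma LFgd_conj_perm_diag {d : ℕ} (σ : Equiv.Perm (Fin d)) (v : Fin d → ℂ) :
    Equiv.Perm.permMatrix ℂ σ * Matrix.diagonal v * star (Equiv.Perm.permMatrix ℂ σ)
      = Matrix.diagonal (v ∘ σ) := by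
  rw [LFgd_star_perm, Equiv.Perm.permMatrix, Equiv.Perm.permMatrix, PEquiv.toMatrix_toPEquiv_mul,
    PEquiv.mul_toMatrix_toPEquiv]
  ext i j
  simp [Matrix.submatrix, Matrix.diagonal_apply, Equiv.Perm.inv_def, Equiv.symm_apply_eq]

/-- The real-linear map sending a vector `v : ℝ^d` to the complex diagonal matrix `diag(v)`. -/
noncomputable def LFgd_diagMapC (d : ℕ) : (Fin d → ℝ) →ₗ[ℝ] Matrix (Fin d) (Fin d) ℂ where
  toFun v := Matrix.diagonal (fun i => (v i : ℂ))
  map_add' u v := by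
    ext i j
    by_cases h : i = j <;> simp [Matrix.diagonal_apply, h]
  map_smul' c v := by
    ext i j
    by_cases h : i = j <;>
      simp [Matrix.diagonal_apply, h, Complex.real_smul]

/-- **Lemma (diagonal Gateaux derivatives of `𝓛_F`).**
If `F : ℝ^d_≥ → ℝ^d` is C¹ point-symmetric at `α` (its extension `F^ext` is
point-symmetric and C¹ at `α`, with derivative `D`), then the Gateaux
derivative of `𝓛_F` at `Λ_α` in the direction `E_{m,m}` exists and equals
`diag((F^ext)'|_α e_m)`, i.e.
`lim_{h→0} (𝓛_F(Λ_α + h E_{m,m}) − 𝓛_F(Λ_α))/h = diag((F^ext)'|_α e_m)`. -/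
theorem LF_gateaux_diagonal {d : ℕ}
    (F Fext : (Fin d → ℝ) → Fin d → ℝ) (α : Fin d → ℝ)
    (LF : Matrix (Fin d) (Fin d) ℂ → Matrix (Fin d) (Fin d) ℂ)
    (D : (Fin d → ℝ) →L[ℝ] (Fin d → ℝ)) (m : Fin d)
    (hα : Antitone α)
    -- `Fext` is the extension `F^ext` of `F`, obtained by sorting the argument:
    (hFext : ∀ x : Fin d → ℝ, ∃ σ : Equiv.Perm (Fin d),
      Antitone (x ∘ σ) ∧ Fext x = F (x ∘ σ) ∘ σ.symm)
    -- `F` is C¹ point-symmetric at `α`: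
    (hsym : ∀ (x : Fin d → ℝ) (σ : Equiv.Perm (Fin d)), Fext (x ∘ σ) = Fext x ∘ σ)
    (hC1 : ContDiffAt ℝ 1 Fext α)
    (hD : HasFDerivAt Fext D α)
    -- `LF` is the matrix function `𝓛_F` determined by spectral decompositions:
    (hLF : ∀ (B V : Matrix (Fin d) (Fin d) ℂ) (ξ : Fin d → ℝ),
      V ∈ Matrix.unitaryGroup (Fin d) ℂ → Antitone ξ →
      B = V * Matrix.diagonal (fun i => (ξ i : ℂ)) * star V →
      LF B = V * Matrix.diagonal (fun i => (F ξ i : ℂ)) * star V) :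
    Tendsto
      (fun h : ℝ => (h : ℂ)⁻¹ •
        (LF (Matrix.diagonal (fun i => (α i : ℂ)) + h • Matrix.single m m (1 : ℂ))
          - LF (Matrix.diagonal (fun i => (α i : ℂ)))))
      (nhdsWithin (0 : ℝ) {0}ᶜ)
      (nhds (Matrix.diagonal fun i => (D (Pi.single m 1) i : ℂ))) := by
  set c : Fin d → ℝ := Pi.single m 1 with hc
  -- `LF` acts on any real diagonal matrix by applying `Fext` to the diagonal.
  have key : ∀ x : Fin d → ℝ,
      LF (Matrix.diagonal (fun i => (x i : ℂ))) = Matrix.diagonal (fun i => (Fext x i : ℂ)) := by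
    intro x
    obtain ⟨σ, hanti, heq⟩ := hFext x
    rw [hLF _ (Equiv.Perm.permMatrix ℂ σ.symm) (x ∘ σ) (LFgd_perm_unitary _) hanti ?_,
      LFgd_conj_perm_diag]
    · exact congrArg Matrix.diagonal (by funext i; simp [heq])
    · rw [LFgd_conj_perm_diag]; exact congrArg Matrix.diagonal (by funext i; simp)
  -- rewrite the perturbed matrix as a diagonal matrix
  have hdiag : ∀ h : ℝ,
      Matrix.diagonal (fun i => (α i : ℂ)) + h • Matrix.single m m (1 : ℂ)
        = Matrix.diagonal (fun i => ((α + h • c) i : ℂ)) := by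
    intro h
    ext i j
    rcases eq_or_ne i j with rfl | hij
    · rcases eq_or_ne i m with rfl | him
      · simp [Matrix.single, hc, Pi.single_apply, Complex.real_smul]
      · simp [Matrix.single, hc, Pi.single_apply, him, Ne.symm him, Complex.real_smul]
    · simp only [Matrix.add_apply, Matrix.diagonal_apply_ne _ hij, Matrix.smul_apply,
        Matrix.single, Matrix.of_apply, smul_ite, smul_zero, zero_add]
      split_ifs with hcond
      · exact absurd (hcond.1.symm.trans hcond.2) hij
      · rfl
  -- the directional derivative
  have hφ : HasDerivAt (fun h : ℝ => α + h • c) c 0 := by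
    simpa using ((hasDerivAt_id (0 : ℝ)).smul_const c).const_add α
  have hD' : HasFDerivAt Fext D (α + (0 : ℝ) • c) := by simpa using hD
  have hf : HasDerivAt (fun h : ℝ => Fext (α + h • c)) (D c) 0 := hD'.comp_hasDerivAt _ hφ
  have hslope := hasDerivAt_iff_tendsto_slope.mp hf
  -- scalar compatibility
  have hsmul : ∀ (r : ℝ) (M : Matrix (Fin d) (Fin d) ℂ), (r : ℂ) • M = r • M := by
    intro r M
    ext i j
    simp [Complex.real_smul]
  have main_eq : ∀ h : ℝ,
      (h : ℂ)⁻¹ •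
        (LF (Matrix.diagonal (fun i => (α i : ℂ)) + h • Matrix.single m m (1 : ℂ))
          - LF (Matrix.diagonal (fun i => (α i : ℂ))))
        = LFgd_diagMapC d (h⁻¹ • (Fext (α + h • c) - Fext α)) := by
    intro h
    rw [hdiag h, key, key, ← Complex.ofReal_inv, hsmul, _root_.map_smul, map_sub]
    rfl
  have final :=
    ((LFgd_diagMapC d).continuous_of_finiteDimensional.tendsto (D c)).comp hslope
  have hlim : Matrix.diagonal (fun i => ((D (Pi.single m 1)) i : ℂ)) = LFgd_diagMapC d (D c) := rfl
  rw [hlim]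
  apply final.congr
  intro h
  simp only [Function.comp_apply, slope, vsub_eq_sub, sub_zero]
  rw [main_eq h]
  simp
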